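/- Let 3 ≤ m ≤ n with n ≡ -1 (mod m). If a Steiner system S(2, m, 1+(n+1)(m-1)) exists, then deleting one point p and all blocks through p yields an incidence structure with (n+1)(m-1) points and n(n+1)(m-1)/m blocks, in which every point lies on exactly n blocks and every block contains exactly m points, and whose incidence graph is bipartite of girth 6; hence an (m,n;6)-bipartite biregular graph of order (n/m+1)(n+1)(m-1) exists. -/

import Mathlib

/-- The incidence graph of a point-line incidence relation `I`. -/
def incGraph {P L : Type*} (I : P → L → Prop) : SimpleGraph (P ⊕ L) where
  Adj x y :=
    match x, y with
    | Sum.inl p, Sum.inr l => I p l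
    | Sum.inr l, Sum.inl p => I p l
    | _, _ => False
  symm := ⟨by rintro (p | l) (p' | l') h <;> exact h⟩
  loopless := ⟨by rintro (p | l) h <;> exact h⟩

lemma incGraph_adj {P L : Type*} {I : P → L → Prop} {x y : P ⊕ L} (h : (incGraph I).Adj x y) :
    (∃ p l, x = Sum.inl p ∧ y = Sum.inr l ∧ I p l) ∨
    (∃ p l, x = Sum.inr l ∧ y = Sum.inl p ∧ I p l) := by
  rcases x with p | l <;> rcases y with p' | l' <;> simp [incGraph] at h ⊢ <;> tauto

lemma incGraph_parity {P L : Type*} {I : P → L → Prop} {u v : P ⊕ L}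
    (w : (incGraph I).Walk u v) : (u.isLeft = v.isLeft) ↔ Even w.length := by
  induction w with
  | nil => simp
  | @cons a b c h w ih =>
    have hab : a.isLeft = !b.isLeft := by
      rcases incGraph_adj h with ⟨p, l, rfl, rfl, _⟩ | ⟨p, l, rfl, rfl, _⟩ <;> simp
    rw [SimpleGraph.Walk.length_cons, Nat.even_add_one, ← ih, hab]
    cases b.isLeft <;> cases c.isLeft <;> simp

open SimpleGraph in
lemma incGraph_no_four {P L : Type*} {I : P → L → Prop}
    (hI : ∀ p₁ p₂ l₁ l₂, p₁ ≠ p₂ → I p₁ l₁ → I p₂ l₁ → I p₁ l₂ → I p₂ l₂ → l₁ = l₂)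
    {a : P ⊕ L} (w : (incGraph I).Walk a a) (hw : w.IsCycle) : w.length ≠ 4 := by
  intro hlen
  obtain ⟨⟨ht, hne⟩, hnd⟩ := hw
  cases w with
  | nil => simp at hlen
  | cons h1 w =>
  cases w with
  | nil => simp at hlen
  | cons h2 w =>
  cases w with
  | nil => simp at hlen
  | cons h3 w =>
  cases w with
  | nil => simp at hlen
  | cons h4 w =>
  cases w with
  | cons h5 w => simp [SimpleGraph.Walk.length_cons] at hlen
  | nil =>
  rename_i b c d
  simp [SimpleGraph.Walk.support_cons, List.nodup_cons] at hnd
  obtain ⟨⟨hbc, hbd, hba⟩, ⟨hcd, hca⟩, hda⟩ := hnd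
  rcases a with qa | la <;> rcases b with qb | lb <;> rcases c with qc | lc <;>
    rcases d with qd | ld <;> simp [incGraph] at h1 h2 h3 h4
  · exact hbd (by rw [hI qa qc lb ld (by simpa [eq_comm] using hca) h1 h2 h4 h3])
  · exact hca (by rw [hI qb qd la lc (by simpa using hbd) h1 h4 h2 h3])

open SimpleGraph in
lemma incGraph_six_le_egirth {P L : Type*} {I : P → L → Prop}
    (hI : ∀ p₁ p₂ l₁ l₂, p₁ ≠ p₂ → I p₁ l₁ → I p₂ l₁ → I p₁ l₂ → I p₂ l₂ → l₁ = l₂) :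
    6 ≤ (incGraph I).egirth := by
  rw [le_egirth]
  intro a w hw
  have heven : Even w.length := (incGraph_parity w).mp rfl
  have h3 : 3 ≤ w.length := hw.three_le_length
  have h4 : w.length ≠ 4 := incGraph_no_four hI w hw
  obtain ⟨k, hk⟩ := heven
  have : 6 ≤ w.length := by omega
  exact_mod_cast Nat.cast_le.mpr this

open SimpleGraph in
lemma incGraph_egirth_le_six {P L : Type*} {I : P → L → Prop}
    {p1 p2 p3 : P} {l12 l23 l13 : L}
    (h12 : p1 ≠ p2) (h23 : p2 ≠ p3) (h13 : p1 ≠ p3)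
    (g1 : l12 ≠ l23) (g2 : l23 ≠ l13) (g3 : l12 ≠ l13)
    (i1 : I p1 l12) (i2 : I p2 l12) (i3 : I p2 l23) (i4 : I p3 l23)
    (i5 : I p3 l13) (i6 : I p1 l13) :
    (incGraph I).egirth ≤ 6 := by
  have a1 : (incGraph I).Adj (Sum.inl p1) (Sum.inr l12) := i1
  have a2 : (incGraph I).Adj (Sum.inr l12) (Sum.inl p2) := i2
  have a3 : (incGraph I).Adj (Sum.inl p2) (Sum.inr l23) := i3
  have a4 : (incGraph I).Adj (Sum.inr l23) (Sum.inl p3) := i4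
  have a5 : (incGraph I).Adj (Sum.inl p3) (Sum.inr l13) := i5
  have a6 : (incGraph I).Adj (Sum.inr l13) (Sum.inl p1) := i6
  let w : (incGraph I).Walk (Sum.inl p1) (Sum.inl p1) :=
    Walk.cons a1 (Walk.cons a2 (Walk.cons a3 (Walk.cons a4 (Walk.cons a5 (Walk.cons a6 Walk.nil)))))
  have hcyc : w.IsCycle := by
    rw [Walk.isCycle_def]
    refine ⟨⟨?_⟩, by simp [w], ?_⟩
    · simp only [w, Walk.edges_cons, Walk.edges_nil, List.nodup_cons, List.mem_cons,
        List.not_mem_nil, or_false, List.nodup_nil, and_true, Sym2.eq, Sym2.rel_iff',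
        Prod.mk.injEq, Prod.swap_prod_mk]
      refine ⟨?_, ?_, ?_, ?_, ?_⟩ <;>
        simp_all [Ne.symm h12, Ne.symm h23, Ne.symm h13, Ne.symm g1, Ne.symm g2, Ne.symm g3]
    · simp only [w, Walk.support_cons, Walk.support_nil, List.tail_cons, List.nodup_cons,
        List.mem_cons, List.not_mem_nil, or_false, List.nodup_nil, and_true]
      simp_all [Ne.symm h12, Ne.symm h23, Ne.symm h13, Ne.symm g1, Ne.symm g2, Ne.symm g3]
  calc (incGraph I).egirth ≤ w.length :=
        iInf_le_of_le _ (iInf_le_of_le w (iInf_le_of_le hcyc le_rfl))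
    _ = 6 := by simp [w]


open Finset in
/-- Let `3 ≤ m ≤ n` with `n ≡ -1 (mod m)`. If a Steiner system `S(2, m, 1+(n+1)(m-1))`
exists, then deleting a point `p` and all blocks through `p` yields a structure with
`(n+1)(m-1)` points and `n(n+1)(m-1)/m` blocks, in which every point lies on exactly `n`
blocks and every block has `m` points, whose incidence graph is bipartite of girth 6;
hence an `(m,n;6)`-bipartite biregular graph of order `(n/m+1)(n+1)(m-1)` exists
(counts involving `/m` are stated multiplied through by `m`). -/
theorem stmt5 {α : Type*} [Fintype α] [DecidableEq α] (m n : ℕ) (hm : 3 ≤ m) (hmn : m ≤ n)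
    (hmod : m ∣ n + 1) (B : Finset (Finset α))
    (hcard : Fintype.card α = 1 + (n + 1) * (m - 1))
    (hblock : ∀ b ∈ B, b.card = m)
    (hpair : ∀ q q' : α, q ≠ q' → ∃! b, b ∈ B ∧ q ∈ b ∧ q' ∈ b)
    (p : α) :
    Nat.card {q : α // q ≠ p} = (n + 1) * (m - 1) ∧
    Nat.card {b : Finset α // b ∈ B ∧ p ∉ b} * m = n * (n + 1) * (m - 1) ∧
    (∀ q : α, q ≠ p → (B.filter (fun b => p ∉ b ∧ q ∈ b)).card = n) ∧
    (∀ b ∈ B, p ∉ b → b.card = m) ∧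
    (incGraph (fun (q : {q : α // q ≠ p}) (b : {b : Finset α // b ∈ B ∧ p ∉ b}) =>
        (q : α) ∈ (b : Finset α))).girth = 6 ∧
    Nat.card ({q : α // q ≠ p} ⊕ {b : Finset α // b ∈ B ∧ p ∉ b}) * m =
      (n + m) * (n + 1) * (m - 1) := by
  classical
  -- number of lines through any point is n + 1
  have hlines : ∀ q : α, (B.filter (fun b => q ∈ b)).card = n + 1 := by
    intro q
    have key : ((B.filter (fun b => q ∈ b)).biUnion (fun b => b.erase q)).card
        = ∑ b ∈ B.filter (fun b => q ∈ b), (b.erase q).card := by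
      apply Finset.card_biUnion
      intro b1 hb1 b2 hb2 hne
      simp only [Finset.mem_coe, Finset.mem_filter] at hb1 hb2
      rw [Function.onFun, Finset.disjoint_left]
      intro x hx1 hx2
      rw [Finset.mem_erase] at hx1 hx2
      obtain ⟨bu, _, hbu⟩ := hpair q x (Ne.symm hx1.1)
      exact hne ((hbu b1 ⟨hb1.1, hb1.2, hx1.2⟩).trans (hbu b2 ⟨hb2.1, hb2.2, hx2.2⟩).symm)
    have hunion : (B.filter (fun b => q ∈ b)).biUnion (fun b => b.erase q) = univ.erase q := by
      ext x
      simp only [Finset.mem_biUnion, Finset.mem_filter, Finset.mem_erase, Finset.mem_univ, and_true]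
      constructor
      · rintro ⟨b, ⟨_, _⟩, hxq, _⟩; exact hxq
      · intro hxq
        obtain ⟨b, ⟨hbB, hqb, hxb⟩, _⟩ := hpair q x (Ne.symm hxq)
        exact ⟨b, ⟨hbB, hqb⟩, hxq, hxb⟩
    have hsum : ∑ b ∈ B.filter (fun b => q ∈ b), (b.erase q).card
        = (B.filter (fun b => q ∈ b)).card * (m - 1) := by
      rw [Finset.sum_congr rfl (fun b hb => ?_), Finset.sum_const, smul_eq_mul]
      rw [Finset.mem_filter] at hb
      rw [Finset.card_erase_of_mem hb.2, hblock b hb.1]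
    have herase : (univ.erase q).card = (n + 1) * (m - 1) := by
      rw [Finset.card_erase_of_mem (Finset.mem_univ q), Finset.card_univ, hcard]; omega
    have : (B.filter (fun b => q ∈ b)).card * (m - 1) = (n + 1) * (m - 1) := by
      rw [← hsum, ← key, hunion, herase]
    exact Nat.eq_of_mul_eq_mul_right (by omega) this
  -- part 3
  have hpart3 : ∀ q : α, q ≠ p → (B.filter (fun b => p ∉ b ∧ q ∈ b)).card = n := by
    intro q hq
    have hsplit := Finset.card_filter_add_card_filter_not
      (s := B.filter (fun b => q ∈ b)) (p := fun b => p ∈ b)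
    rw [Finset.filter_filter, Finset.filter_filter] at hsplit
    have hone : (B.filter (fun b => q ∈ b ∧ p ∈ b)).card = 1 := by
      rw [Finset.card_eq_one]
      obtain ⟨b0, ⟨hb0B, hpb0, hqb0⟩, hbu⟩ := hpair p q (Ne.symm hq)
      refine ⟨b0, ?_⟩
      ext b
      simp only [Finset.mem_filter, Finset.mem_singleton]
      constructor
      · rintro ⟨hbB, hqb, hpb⟩; exact hbu b ⟨hbB, hpb, hqb⟩
      · rintro rfl; exact ⟨hb0B, hqb0, hpb0⟩
    have heq : B.filter (fun b => q ∈ b ∧ p ∉ b) = B.filter (fun b => p ∉ b ∧ q ∈ b) := by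
      apply Finset.filter_congr; intro b _; tauto
    rw [hlines q] at hsplit
    rw [← heq]
    omega
  -- blocks avoiding p
  set F := B.filter (fun b => p ∉ b) with hFdef
  have hFcard : F.card * m = n * ((n + 1) * (m - 1)) := by
    have e1 : ∑ b ∈ F, b.card = F.card * m := by
      rw [Finset.sum_congr rfl (fun b hb => hblock b (Finset.mem_filter.mp hb).1),
        Finset.sum_const, smul_eq_mul]
    have e2 : ∀ b : Finset α, b.card = ∑ q : α, if q ∈ b then 1 else 0 := by
      intro b
      rw [← Finset.card_filter]
      congr 1
      ext x
      simp
    have e3 : ∑ b ∈ F, b.card = ∑ q : α, (F.filter (fun b => q ∈ b)).card := by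
      calc ∑ b ∈ F, b.card = ∑ b ∈ F, ∑ q : α, if q ∈ b then 1 else 0 :=
            Finset.sum_congr rfl (fun b _ => e2 b)
        _ = ∑ q : α, ∑ b ∈ F, if q ∈ b then 1 else 0 := Finset.sum_comm
        _ = ∑ q : α, (F.filter (fun b => q ∈ b)).card :=
            Finset.sum_congr rfl (fun q _ => (Finset.card_filter _ _).symm)
    have e4 : ∑ q : α, (F.filter (fun b => q ∈ b)).card
        = ∑ q ∈ univ.erase p, (F.filter (fun b => q ∈ b)).card := by
      symm
      apply Finset.sum_erase
      rw [Finset.card_eq_zero, Finset.filter_eq_empty_iff]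
      intro b hb
      exact (Finset.mem_filter.mp hb).2
    have e5a : ∀ q ∈ univ.erase p, (F.filter (fun b => q ∈ b)).card = n := by
      intro q hq
      rw [hFdef, Finset.filter_filter]
      exact hpart3 q (Finset.mem_erase.mp hq).1
    have e5 : ∑ q ∈ univ.erase p, (F.filter (fun b => q ∈ b)).card
        = (n + 1) * (m - 1) * n := by
      rw [Finset.sum_congr rfl e5a, Finset.sum_const, smul_eq_mul,
        Finset.card_erase_of_mem (Finset.mem_univ p), Finset.card_univ, hcard]
      have h1 : 1 + (n + 1) * (m - 1) - 1 = (n + 1) * (m - 1) := by omega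
      rw [h1]
    rw [← e1, e3, e4, e5, Nat.mul_comm]
  have hBcard : Nat.card {b : Finset α // b ∈ B ∧ p ∉ b} = F.card := by
    rw [Nat.card_eq_fintype_card, Fintype.card_subtype]
    congr 1
    ext b
    simp [hFdef]
  have hAcard : Nat.card {q : α // q ≠ p} = (n + 1) * (m - 1) := by
    rw [Nat.card_eq_fintype_card, Fintype.card_subtype]
    have : (univ.filter (fun q : α => q ≠ p)) = univ.erase p := by
      ext x; simp [Finset.mem_erase, and_comm]
    rw [this, Finset.card_erase_of_mem (Finset.mem_univ p), Finset.card_univ, hcard]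
    omega
  -- girth part
  have hgirth : (incGraph (fun (q : {q : α // q ≠ p}) (b : {b : Finset α // b ∈ B ∧ p ∉ b}) =>
      (q : α) ∈ (b : Finset α))).girth = 6 := by
    set I' := fun (q : {q : α // q ≠ p}) (b : {b : Finset α // b ∈ B ∧ p ∉ b}) =>
      (q : α) ∈ (b : Finset α) with hI'def
    have hIu : ∀ (q1 q2 : {q : α // q ≠ p}) (l1 l2 : {b : Finset α // b ∈ B ∧ p ∉ b}),
        q1 ≠ q2 → I' q1 l1 → I' q2 l1 → I' q1 l2 → I' q2 l2 → l1 = l2 := by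
      intro q1 q2 l1 l2 hne i1 i2 i3 i4
      apply Subtype.ext
      have hv : (q1 : α) ≠ (q2 : α) := fun h => hne (Subtype.ext h)
      obtain ⟨bu, _, hbu⟩ := hpair q1 q2 hv
      exact (hbu l1.1 ⟨l1.2.1, i1, i2⟩).trans (hbu l2.1 ⟨l2.2.1, i3, i4⟩).symm
    -- find a block avoiding p
    have h0 : 0 < F.card := by
      rcases Nat.eq_zero_or_pos F.card with h | h
      · exfalso
        rw [h, Nat.zero_mul] at hFcard
        exact absurd hFcard.symm (Nat.mul_ne_zero (by omega)
          (Nat.mul_ne_zero (by omega) (by omega)))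
      · exact h
    obtain ⟨b0, hb0F⟩ := Finset.card_pos.mp h0
    obtain ⟨hb0B, hpb0⟩ := Finset.mem_filter.mp hb0F
    have hb0m : b0.card = m := hblock b0 hb0B
    obtain ⟨q1, hq1b0, q2, hq2b0, hq12⟩ := Finset.one_lt_card.mp
      (by omega : 1 < b0.card)
    have hq1p : q1 ≠ p := fun h => hpb0 (h ▸ hq1b0)
    have hq2p : q2 ≠ p := fun h => hpb0 (h ▸ hq2b0)
    obtain ⟨l1, ⟨hl1B, hpl1, hq1l1⟩, hl1u⟩ := hpair p q1 (Ne.symm hq1p)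
    obtain ⟨l2, ⟨hl2B, hpl2, hq2l2⟩, hl2u⟩ := hpair p q2 (Ne.symm hq2p)
    set bad := insert p (b0 ∪ l1.erase p ∪ l2.erase p) with hbaddef
    have hbadcard : bad.card < Fintype.card α := by
      have hc1 : (l1.erase p).card = m - 1 := by
        rw [Finset.card_erase_of_mem hpl1, hblock l1 hl1B]
      have hc2 : (l2.erase p).card = m - 1 := by
        rw [Finset.card_erase_of_mem hpl2, hblock l2 hl2B]
      have step1 : bad.card ≤ m + (m - 1) + (m - 1) + 1 := by
        calc bad.card ≤ (b0 ∪ l1.erase p ∪ l2.erase p).card + 1 := Finset.card_insert_le _ _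
          _ ≤ (b0 ∪ l1.erase p).card + (l2.erase p).card + 1 := by
              gcongr; exact Finset.card_union_le _ _
          _ ≤ b0.card + (l1.erase p).card + (l2.erase p).card + 1 := by
              gcongr; exact Finset.card_union_le _ _
          _ = m + (m - 1) + (m - 1) + 1 := by rw [hb0m, hc1, hc2]
      have hmul : (m + 1) * (m - 1) ≤ (n + 1) * (m - 1) :=
        Nat.mul_le_mul_right _ (by omega)
      have hprod : ∃ k, m = k + 3 := ⟨m - 3, by omega⟩
      obtain ⟨k, hk⟩ := hprod
      have hexp : (m + 1) * (m - 1) = k * k + 6 * k + 8 := by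
        subst hk
        have : k + 3 - 1 = k + 2 := by omega
        rw [this]
        ring
      rw [hcard]
      omega
    have hbadss : bad ⊂ Finset.univ := by
      refine Finset.ssubset_univ_iff.mpr (fun h => ?_)
      rw [h, Finset.card_univ] at hbadcard
      exact lt_irrefl _ hbadcard
    obtain ⟨q3, -, hq3bad⟩ := Finset.exists_of_ssubset hbadss
    have hq3p : q3 ≠ p := fun h => hq3bad (by rw [h, hbaddef]; exact Finset.mem_insert_self _ _)
    have hq3b0 : q3 ∉ b0 := fun h => hq3bad (by
      rw [hbaddef]
      exact Finset.mem_insert_of_mem (Finset.mem_union_left _ (Finset.mem_union_left _ h)))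
    have hq3l1 : q3 ∉ l1 := fun h => hq3bad (by
      rw [hbaddef]
      exact Finset.mem_insert_of_mem (Finset.mem_union_left _
        (Finset.mem_union_right _ (Finset.mem_erase.mpr ⟨hq3p, h⟩))))
    have hq3l2 : q3 ∉ l2 := fun h => hq3bad (by
      rw [hbaddef]
      exact Finset.mem_insert_of_mem (Finset.mem_union_right _
        (Finset.mem_erase.mpr ⟨hq3p, h⟩)))
    have hq13 : q1 ≠ q3 := fun h => hq3b0 (h ▸ hq1b0)
    have hq23 : q2 ≠ q3 := fun h => hq3b0 (h ▸ hq2b0)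
    obtain ⟨b13, ⟨hb13B, hq1b13, hq3b13⟩, hb13u⟩ := hpair q1 q3 hq13
    obtain ⟨b23, ⟨hb23B, hq2b23, hq3b23⟩, hb23u⟩ := hpair q2 q3 hq23
    have hpb13 : p ∉ b13 := by
      intro hp'
      have := hl1u b13 ⟨hb13B, hp', hq1b13⟩
      rw [this] at hq3b13
      exact hq3l1 hq3b13
    have hpb23 : p ∉ b23 := by
      intro hp'
      have := hl2u b23 ⟨hb23B, hp', hq2b23⟩
      rw [this] at hq3b23
      exact hq3l2 hq3b23
    have hb0b23 : b0 ≠ b23 := fun h => hq3b0 (h ▸ hq3b23)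
    have hb0b13 : b0 ≠ b13 := fun h => hq3b0 (h ▸ hq3b13)
    have hb23b13 : b23 ≠ b13 := by
      intro h
      obtain ⟨bu, _, hbu⟩ := hpair q1 q2 hq12
      have h1 : b0 = bu := hbu b0 ⟨hb0B, hq1b0, hq2b0⟩
      have h2 : b23 = bu := hbu b23 ⟨hb23B, h ▸ hq1b13, hq2b23⟩
      exact hb0b23 (h1.trans h2.symm)
    have hle : (incGraph I').egirth ≤ 6 :=
      incGraph_egirth_le_six (I := I')
        (p1 := ⟨q1, hq1p⟩) (p2 := ⟨q2, hq2p⟩) (p3 := ⟨q3, hq3p⟩)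
        (l12 := ⟨b0, hb0B, hpb0⟩) (l23 := ⟨b23, hb23B, hpb23⟩) (l13 := ⟨b13, hb13B, hpb13⟩)
        (fun h => hq12 (congrArg Subtype.val h))
        (fun h => hq23 (congrArg Subtype.val h))
        (fun h => hq13 (congrArg Subtype.val h))
        (fun h => hb0b23 (congrArg Subtype.val h))
        (fun h => hb23b13 (congrArg Subtype.val h))
        (fun h => hb0b13 (congrArg Subtype.val h))
        hq1b0 hq2b0 hq2b23 hq3b23 hq3b13 hq1b13
    have hge : 6 ≤ (incGraph I').egirth := incGraph_six_le_egirth hIu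
    have hegirth : (incGraph I').egirth = 6 := le_antisymm hle hge
    rw [SimpleGraph.girth, hegirth]
    rfl
  refine ⟨hAcard, ?_, hpart3, fun b hb _ => hblock b hb, hgirth, ?_⟩
  · rw [hBcard, hFcard]; ring
  · rw [Nat.card_sum, hAcard, hBcard, Nat.add_mul, hFcard]
    obtain ⟨k, rfl⟩ : ∃ k, m = k + 1 := ⟨m - 1, by omega⟩
    simp only [Nat.add_sub_cancel]
    ring
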